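/- Let f : ℝ → ℝ be piecewise affine with breakpoint set E where |E| ≤ m. Then the function x ↦ max(f(x), 0) is piecewise affine with at most 2m + 1 breakpoints: on each of the at most m + 1 connected components of ℝ \ E the ReLU can create at most one new knot (at the zero crossing of the affine piece), and knots of f lying in regions where the affine piece is nonpositive are destroyed (the output is identically 0 there). -/
import Mathlib


/-- `f : ℝ → ℝ` is piecewise affine with breakpoint set `E` if on every open
interval (open order-connected set) disjoint from `E` it agrees with an affine map. -/
def PiecewiseAffine (f : ℝ → ℝ) (E : Set ℝ) : Prop :=
  ∀ I : Set ℝ, IsOpen I → I.OrdConnected → I ∩ E = ∅ →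
    ∃ a b : ℝ, ∀ x ∈ I, f x = a * x + b

/-- The potential new knot created by applying ReLU to `x ↦ a*x+b`. -/
noncomputable def reluKnot (a b : ℝ) : ℝ := if a = 0 then 0 else -b / a

/-- On an order-connected set avoiding `reluKnot a b`, the ReLU of an affine map
is affine. -/
lemma relu_affine (a b : ℝ) (I : Set ℝ) (hI : I.OrdConnected)
    (h0 : reluKnot a b ∉ I) :
    ∃ a' b' : ℝ, ∀ x ∈ I, max (a * x + b) 0 = a' * x + b' := by
  by_cases ha : a = 0
  · exact ⟨0, max b 0, fun x _ => by simp [ha]⟩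
  · by_cases hpos : ∀ x ∈ I, 0 ≤ a * x + b
    · exact ⟨a, b, fun x hx => max_eq_left (hpos x hx)⟩
    · push_neg at hpos
      obtain ⟨x, hxI, hx⟩ := hpos
      refine ⟨0, 0, fun y hyI => ?_⟩
      simp only [zero_mul, zero_add]
      rcases le_or_gt (a * y + b) 0 with h | h
      · exact max_eq_right h
      · exfalso
        apply h0
        have hknot : reluKnot a b = -b / a := by simp [reluKnot, ha]
        rcases lt_or_gt_of_ne ha with haneg | hapos
        · -- a < 0 : y < -b/a < x
          have h1 : y < -b / a := by
            rw [lt_div_iff_of_neg haneg]; nlinarith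
          have h2 : -b / a < x := by
            rw [div_lt_iff_of_neg haneg]; nlinarith
          have := hI.out hyI hxI
          rw [hknot]
          exact this ⟨le_of_lt h1, le_of_lt h2⟩
        · -- a > 0 : x < -b/a < y
          have h1 : x < -b / a := by
            rw [lt_div_iff₀ hapos]; nlinarith
          have h2 : -b / a < y := by
            rw [div_lt_iff₀ hapos]; nlinarith
          have := hI.out hxI hyI
          rw [hknot]
          exact this ⟨le_of_lt h1, le_of_lt h2⟩

lemma relu_key : ∀ (n : ℕ) (E : Finset ℝ), E.card = n → ∀ f : ℝ → ℝ,
    PiecewiseAffine f ↑E →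
    ∃ E' : Finset ℝ, E'.card ≤ 2 * n + 1 ∧
      PiecewiseAffine (fun x : ℝ => max (f x) 0) ↑E' := by
  intro n
  induction n with
  | zero =>
    intro E hcard f hf
    have hEempty : E = ∅ := Finset.card_eq_zero.mp hcard
    subst hEempty
    obtain ⟨a, b, hab⟩ := hf Set.univ isOpen_univ Set.ordConnected_univ (by simp)
    refine ⟨{reluKnot a b}, by simp, ?_⟩
    intro I hIo hIc hIE
    have h0 : reluKnot a b ∉ I := by
      intro h
      have : reluKnot a b ∈ I ∩ ({reluKnot a b} : Finset ℝ) := ⟨h, by simp⟩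
      rw [hIE] at this; exact this
    obtain ⟨a', b', h⟩ := relu_affine a b I hIc h0
    refine ⟨a', b', fun x hx => ?_⟩
    show max (f x) 0 = a' * x + b'
    rw [hab x (Set.mem_univ x)]
    exact h x hx
  | succ k ih =>
    intro E hcard f hf
    have hne : E.Nonempty := Finset.card_pos.mp (by omega)
    set e := E.max' hne with he
    set E₀ := E.erase e with hE₀
    have hE₀card : E₀.card = k := by
      rw [hE₀, Finset.card_erase_of_mem (E.max'_mem hne)]; omega
    have hlt : ∀ q ∈ E₀, q < e := by
      intro q hq
      have h1 : q ∈ E := Finset.mem_of_mem_erase hq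
      have h2 : q ≠ e := Finset.ne_of_mem_erase hq
      exact lt_of_le_of_ne (E.le_max' q h1) h2
    -- the left-neighbourhood of e inside the complement of E
    set S : Set ℝ := {x | x < e ∧ ∀ q ∈ E₀, q < x} with hS
    have hSopen : IsOpen S := by
      have : S = Set.Iio e ∩ ⋂ q ∈ E₀, Set.Ioi q := by
        ext x
        simp [hS, Set.mem_iInter]
      rw [this]
      exact IsOpen.inter isOpen_Iio (isOpen_biInter_finset fun q _ => isOpen_Ioi)
    have hSoc : S.OrdConnected := by
      constructor
      rintro x ⟨hx1, hx2⟩ z ⟨hz1, hz2⟩ y hy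
      exact ⟨lt_of_le_of_lt hy.2 hz1, fun q hq => lt_of_lt_of_le (hx2 q hq) hy.1⟩
    have hSE : S ∩ ↑E = ∅ := by
      ext x
      simp only [Set.mem_inter_iff, Set.mem_empty_iff_false, iff_false, not_and]
      rintro ⟨hx1, hx2⟩ hxE
      have : x ∈ E₀ := Finset.mem_erase.mpr ⟨ne_of_lt hx1, hxE⟩
      exact lt_irrefl x (hx2 x this)
    obtain ⟨a, b, hab⟩ := hf S hSopen hSoc hSE
    -- f modified to continue the left piece past e
    set f' : ℝ → ℝ := fun x => if x < e then f x else a * x + b with hf'def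
    have hf' : PiecewiseAffine f' ↑E₀ := by
      intro I hIo hIc hIE
      by_cases hsub : I ⊆ Set.Iio e
      · have hIEempty : I ∩ ↑E = ∅ := by
          ext x
          simp only [Set.mem_inter_iff, Set.mem_empty_iff_false, iff_false, not_and]
          intro hxI hxE
          have hx : x ∈ E₀ := Finset.mem_erase.mpr ⟨ne_of_lt (hsub hxI), hxE⟩
          have : x ∈ I ∩ ↑E₀ := ⟨hxI, hx⟩
          rw [hIE] at this; exact this
        obtain ⟨a1, b1, h1⟩ := hf I hIo hIc hIEempty
        refine ⟨a1, b1, fun x hx => ?_⟩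
        have hxlt : x < e := hsub hx
        show (if x < e then f x else a * x + b) = a1 * x + b1
        rw [if_pos hxlt]
        exact h1 x hx
      · rw [Set.not_subset] at hsub
        obtain ⟨z, hzI, hze⟩ := hsub
        have hze' : e ≤ z := not_lt.mp hze
        refine ⟨a, b, fun x hx => ?_⟩
        show (if x < e then f x else a * x + b) = a * x + b
        by_cases hxe : x < e
        · have hxS : x ∈ S := by
            refine ⟨hxe, fun q hq => ?_⟩
            by_contra hqx
            push_neg at hqx
            have hqI : q ∈ I := hIc.out hx hzI ⟨hqx, le_of_lt (lt_of_lt_of_le (hlt q hq) hze')⟩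
            have : q ∈ I ∩ ↑E₀ := ⟨hqI, hq⟩
            rw [hIE] at this; exact this
          rw [if_pos hxe]
          exact hab x hxS
        · rw [if_neg hxe]
    obtain ⟨E'', hE''card, hE''pa⟩ := ih E₀ hE₀card f' hf'
    -- the affine piece of f to the right of e
    have hIoiE : Set.Ioi e ∩ ↑E = ∅ := by
      ext x
      simp only [Set.mem_inter_iff, Set.mem_empty_iff_false, iff_false, not_and]
      intro hx hxE
      exact absurd (E.le_max' x hxE) (not_le.mpr hx)
    obtain ⟨a', b', hab'⟩ := hf (Set.Ioi e) isOpen_Ioi Set.ordConnected_Ioi hIoiE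
    refine ⟨insert e (insert (reluKnot a' b') E''), ?_, ?_⟩
    · calc (insert e (insert (reluKnot a' b') E'')).card
          ≤ (insert (reluKnot a' b') E'').card + 1 := Finset.card_insert_le _ _
        _ ≤ E''.card + 1 + 1 := by
            have := Finset.card_insert_le (reluKnot a' b') E''
            omega
        _ ≤ 2 * (k + 1) + 1 := by omega
    · intro I hIo hIc hIE
      have hnot : ∀ y ∈ (insert e (insert (reluKnot a' b') E'') : Finset ℝ), y ∉ I := by
        intro y hy hyI
        have : y ∈ I ∩ ↑(insert e (insert (reluKnot a' b') E'')) := ⟨hyI, hy⟩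
        rw [hIE] at this; exact this
      have heI : e ∉ I := hnot e (Finset.mem_insert_self _ _)
      by_cases hsub : I ⊆ Set.Iio e
      · have hIE'' : I ∩ ↑E'' = ∅ := by
          ext x
          simp only [Set.mem_inter_iff, Set.mem_empty_iff_false, iff_false, not_and]
          intro hxI hxE''
          exact hnot x (Finset.mem_insert_of_mem (Finset.mem_insert_of_mem hxE'')) hxI
        obtain ⟨a1, b1, h1⟩ := hE''pa I hIo hIc hIE''
        refine ⟨a1, b1, fun x hx => ?_⟩
        have hxlt : x < e := hsub hx
        have h2 := h1 x hx
        show max (f x) 0 = a1 * x + b1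
        have hfx : f' x = f x := if_pos hxlt
        rw [← hfx]
        exact h2
      · rw [Set.not_subset] at hsub
        obtain ⟨z, hzI, hze⟩ := hsub
        have hze' : e ≤ z := not_lt.mp hze
        have hez : e < z := lt_of_le_of_ne hze' (fun h => heI (h ▸ hzI))
        have hIsub : I ⊆ Set.Ioi e := by
          intro x hx
          by_contra hxe
          have hxle : x ≤ e := not_lt.mp (by simpa [Set.mem_Ioi] using hxe)
          have hx' : x < e := lt_of_le_of_ne hxle (fun h => heI (h ▸ hx))
          exact heI (hIc.out hx hzI ⟨le_of_lt hx', le_of_lt hez⟩)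
        have hknot : reluKnot a' b' ∉ I :=
          hnot _ (Finset.mem_insert_of_mem (Finset.mem_insert_self _ _))
        obtain ⟨a1, b1, h1⟩ := relu_affine a' b' I hIc hknot
        refine ⟨a1, b1, fun x hx => ?_⟩
        simp only
        rw [hab' x (hIsub hx)]
        exact h1 x hx

/-- Applying ReLU to a piecewise affine function with at most `m` breakpoints
yields a piecewise affine function with at most `2*m + 1` breakpoints. -/
theorem relu_comp_piecewise_affine_breakpoints
    (f : ℝ → ℝ) (m : ℕ) (E : Finset ℝ) (hE : E.card ≤ m)
    (hf : PiecewiseAffine f ↑E) :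
    ∃ E' : Finset ℝ, E'.card ≤ 2 * m + 1 ∧
      PiecewiseAffine (fun x : ℝ => max (f x) 0) ↑E' := by
  obtain ⟨E', hcard, hpa⟩ := relu_key E.card E rfl f hf
  exact ⟨E', by omega, hpa⟩
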